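/- Let E = (E_1,…,E_n) be a multimatrix and A_E = ⊕_λ M_{d_λ}(ℂ) with measure tr_E. Then (A_E, tr_E) is homogeneous (i.e., φ̃ = λ_A·φ for some nonzero scalar λ_A, where φ̃ is defined from the Casimir element as above) if and only if tr(E_1) = tr(E_2) = ⋯ = tr(E_n) ≠ 0. -/

import Mathlib

open Matrix

lemma sum_diag_stdBasis {m : ℕ} : ∑ k : Fin m, Matrix.single k k (1 : ℂ) = 1 := by
  ext i j
  rw [Matrix.sum_apply]
  by_cases h : i = j
  · subst h
    rw [Matrix.one_apply_eq]
    simp [Matrix.single, Finset.sum_ite_eq']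
  · rw [Matrix.one_apply_ne h]
    refine Finset.sum_eq_zero fun k _ => ?_
    simp only [Matrix.single, Matrix.of_apply]
    exact if_neg fun ⟨h1, h2⟩ => h (h1.symm.trans h2)

/-- `(A_E, tr_E)` is homogeneous (`φ̃ = λ_A·φ` for some nonzero scalar `λ_A`) if and
only if `tr(E_1) = ⋯ = tr(E_n) ≠ 0`. -/
theorem stmt_12 {n : ℕ} (hn : 0 < n) (d : Fin n → ℕ) (hd : ∀ lam, 0 < d lam)
    (E : ∀ lam : Fin n, Matrix (Fin (d lam)) (Fin (d lam)) ℂ)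
    (hE : ∀ lam, IsUnit (E lam).det)
    (phi : (∀ lam : Fin n, Matrix (Fin (d lam)) (Fin (d lam)) ℂ) → ℂ)
    (hphi : ∀ a, phi a = ∑ lam, Matrix.trace (((E lam)⁻¹)ᵀ * a lam))
    (phitilde : (∀ lam : Fin n, Matrix (Fin (d lam)) (Fin (d lam)) ℂ) → ℂ)
    (hphitilde : ∀ a, phitilde a =
      ∑ mu, ∑ k' : Fin (d mu), ∑ l' : Fin (d mu), ∑ r : Fin (d mu),
        E mu l' r * phi (a * Pi.single mu (Matrix.single k' l' 1) *
          Pi.single mu (Matrix.single r k' 1))) :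
    (∃ c : ℂ, c ≠ 0 ∧ ∀ a, phitilde a = c * phi a) ↔
      ((∀ lam mu, Matrix.trace (E lam) = Matrix.trace (E mu)) ∧
        ∀ lam, Matrix.trace (E lam) ≠ 0) := by
  have key : ∀ a, phitilde a =
      ∑ mu, Matrix.trace (E mu) * Matrix.trace (((E mu)⁻¹)ᵀ * a mu) := by
    intro a
    rw [hphitilde]
    refine Finset.sum_congr rfl fun mu _ => ?_
    have hterm : ∀ (k' l' r : Fin (d mu)),
        phi (a * Pi.single mu (Matrix.single k' l' 1) *
          Pi.single mu (Matrix.single r k' 1)) =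
        Matrix.trace (((E mu)⁻¹)ᵀ *
          (a mu * Matrix.single k' l' 1 * Matrix.single r k' 1)) := by
      intro k' l' r
      rw [hphi]
      rw [Finset.sum_eq_single mu]
      · simp [Pi.mul_apply, Pi.single_eq_same]
      · intro lam _ hne
        simp [Pi.mul_apply, Pi.single_eq_of_ne hne]
      · simp
    simp only [hterm]
    have hr : ∀ (k' l' : Fin (d mu)),
        ∑ r : Fin (d mu), E mu l' r * Matrix.trace (((E mu)⁻¹)ᵀ *
          (a mu * Matrix.single k' l' 1 * Matrix.single r k' 1)) =
        E mu l' l' * Matrix.trace (((E mu)⁻¹)ᵀ *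
          (a mu * Matrix.single k' k' 1)) := by
      intro k' l'
      rw [Finset.sum_eq_single l']
      · rw [mul_assoc (a mu), Matrix.single_mul_single_same, one_mul]
      · intro r _ hne
        rw [mul_assoc (a mu), Matrix.single_mul_single_of_ne (h := hne.symm)]
        simp
      · simp
    simp only [hr]
    rw [Finset.sum_comm]
    have hk : ∀ l' : Fin (d mu),
        ∑ k' : Fin (d mu), E mu l' l' * Matrix.trace (((E mu)⁻¹)ᵀ *
          (a mu * Matrix.single k' k' 1)) =
        E mu l' l' * Matrix.trace (((E mu)⁻¹)ᵀ * a mu) := by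
      intro l'
      rw [← Finset.mul_sum, ← Matrix.trace_sum, ← Matrix.mul_sum, ← Matrix.mul_sum,
        sum_diag_stdBasis, mul_one]
    simp only [hk]
    rw [← Finset.sum_mul]
    congr 1
  constructor
  · rintro ⟨c, hc, h⟩
    have htr : ∀ lam, Matrix.trace (E lam) = c := by
      intro lam
      have hd' : ((d lam : ℂ)) ≠ 0 := Nat.cast_ne_zero.mpr (hd lam).ne'
      set a : ∀ mu : Fin n, Matrix (Fin (d mu)) (Fin (d mu)) ℂ :=
        Pi.single lam ((E lam)ᵀ) with ha
      have hphia : phi a = (d lam : ℂ) := by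
        rw [hphi, Finset.sum_eq_single lam]
        · rw [ha, Pi.single_eq_same, ← Matrix.transpose_mul,
            Matrix.mul_nonsing_inv _ (hE lam)]
          simp
        · intro mu _ hne
          rw [ha, Pi.single_eq_of_ne hne]
          simp
        · simp
      have hta : phitilde a = Matrix.trace (E lam) * (d lam : ℂ) := by
        rw [key, Finset.sum_eq_single lam]
        · rw [ha, Pi.single_eq_same, ← Matrix.transpose_mul,
            Matrix.mul_nonsing_inv _ (hE lam)]
          simp
        · intro mu _ hne
          rw [ha, Pi.single_eq_of_ne hne]
          simp
        · simp
      have := h a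
      rw [hta, hphia] at this
      exact mul_right_cancel₀ hd' this
    exact ⟨fun l m => by rw [htr l, htr m], fun l => by rw [htr l]; exact hc⟩
  · rintro ⟨heq, hne⟩
    refine ⟨Matrix.trace (E ⟨0, hn⟩), hne _, fun a => ?_⟩
    rw [key, hphi, Finset.mul_sum]
    exact Finset.sum_congr rfl fun mu _ => by rw [heq mu ⟨0, hn⟩]
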